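/- Let b ≥ 1, e ≥ 1, a = 2b + e, and let L be a 1-reduced list on the path v_0,...,v_n, i.e., |L(0)| = b, |L(i)| = a for 1 ≤ i ≤ n−2, |L(n−1)| = |L(n)| = b + e, and |L(n−1) ∪ L(n)| ≥ 2b. If n equals the smallest even integer ≥ 2b/e, then P is (L,b)-choosable. -/

import Mathlib

def PathChoosable (n : ℕ) (L : ℕ → Finset ℕ) (ω : ℕ → ℕ) : Prop :=
  ∃ c : ℕ → Finset ℕ, (∀ i ≤ n, c i ⊆ L i ∧ (c i).card = ω i) ∧
    ∀ i, i < n → Disjoint (c i) (c (i + 1))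

/-- The smallest even integer `≥ 2b/e` (for `e ≥ 1`), namely `2⌈b/e⌉`. -/
def evenCeil (b e : ℕ) : ℕ := 2 * ((b + e - 1) / e)

/-- `c` is a feasible color set at vertex `i`: there is a valid partial coloring of
`v_0, …, v_i` ending with `c` at `v_i`. -/
def Feas (L : ℕ → Finset ℕ) (b i : ℕ) (c : Finset ℕ) : Prop :=
  ∃ cs : ℕ → Finset ℕ, cs i = c ∧ (∀ j ≤ i, cs j ⊆ L j ∧ (cs j).card = b) ∧
    ∀ j, j < i → Disjoint (cs j) (cs (j + 1))

/-- Invariant: every `b`-subset of `L i` meeting `F` in at least `b - t` elements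
is feasible at `i`. -/
def InvP (L : ℕ → Finset ℕ) (b i t : ℕ) (F : Finset ℕ) : Prop :=
  F ⊆ L i ∧ ∀ c ⊆ L i, c.card = b → b - t ≤ (c ∩ F).card → Feas L b i c

lemma feas_extend {L : ℕ → Finset ℕ} {b i : ℕ} {c c' : Finset ℕ}
    (h : Feas L b i c) (h1 : c' ⊆ L (i + 1)) (h2 : c'.card = b)
    (h3 : Disjoint c c') : Feas L b (i + 1) c' := by
  obtain ⟨cs, hcsi, hmem, hdisj⟩ := h
  refine ⟨fun j => if j = i + 1 then c' else cs j, by simp, ?_, ?_⟩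
  · intro j hj
    by_cases hji : j = i + 1
    · simp [hji, h1, h2]
    · have : j ≤ i := by omega
      simpa [hji] using hmem j this
  · intro j hj
    rcases Nat.lt_or_ge j i with hji | hji
    · have e1 : j ≠ i + 1 := by omega
      have e2 : j + 1 ≠ i + 1 := by omega
      simpa [e1, e2, show j ≠ i by omega] using hdisj j hji
    · have e0 : j = i := by omega
      subst e0
      show Disjoint (if j = j + 1 then c' else cs j)
        (if j + 1 = j + 1 then c' else cs (j + 1))
      rw [if_neg (show j ≠ j + 1 by omega), if_pos rfl, hcsi]
      exact h3

lemma inv_base {L : ℕ → Finset ℕ} {b : ℕ} (h0 : (L 0).card = b) :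
    InvP L b 1 0 (L 1 \ L 0) := by
  refine ⟨Finset.sdiff_subset, ?_⟩
  intro c hc hcard hint
  have hsub : c ∩ (L 1 \ L 0) ⊆ c := Finset.inter_subset_left
  have hle : c.card ≤ (c ∩ (L 1 \ L 0)).card := by omega
  have heq : c ∩ (L 1 \ L 0) = c :=
    Finset.eq_of_subset_of_card_le hsub hle
  have hcs : c ⊆ L 1 \ L 0 := by
    intro x hx
    rw [← heq] at hx
    exact (Finset.mem_inter.1 hx).2
  refine ⟨fun j => if j = 0 then L 0 else c, by simp, ?_, ?_⟩
  · intro j hj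
    interval_cases j
    · simp [h0]
    · simp [hc, hcard]
  · intro j hj
    interval_cases j
    simp only [if_pos rfl, Nat.zero_add, if_neg (by omega : (1:ℕ) ≠ 0)]
    rw [Finset.disjoint_right]
    intro x hx
    exact (Finset.mem_sdiff.1 (hcs hx)).2

lemma inv_step {L : ℕ → Finset ℕ} {b i t δ : ℕ} {F G : Finset ℕ}
    (hLi : 2 * b ≤ (L i).card) (hInv : InvP L b i t F)
    (hG : G ⊆ F) (hGcard : G.card = b + δ) (htδ : t + δ ≤ b) :
    InvP L b (i + 1) (t + δ) (L (i + 1) \ G) := by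
  obtain ⟨hFsub, hF⟩ := hInv
  refine ⟨Finset.sdiff_subset, ?_⟩
  intro c' hc' hcard hint
  -- c' ∩ (L (i+1) \ G) = c' \ G
  have h1 : c' ∩ (L (i + 1) \ G) = c' \ G := by
    ext x
    simp only [Finset.mem_inter, Finset.mem_sdiff]
    constructor
    · rintro ⟨hx, _, hxg⟩; exact ⟨hx, hxg⟩
    · rintro ⟨hx, hxg⟩; exact ⟨hx, hc' hx, hxg⟩
  rw [h1] at hint
  have h2 : (c' \ G).card + (c' ∩ G).card = b := by
    rw [Finset.card_sdiff_add_card_inter, hcard]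
  have h3 : (G \ c').card + (G ∩ c').card = b + δ := by
    rw [Finset.card_sdiff_add_card_inter, hGcard]
  have h4 : (G ∩ c').card = (c' ∩ G).card := by rw [Finset.inter_comm]
  have h5 : b - t ≤ (G \ c').card := by omega
  obtain ⟨X, hX, hXcard⟩ := Finset.exists_subset_card_eq (s := G \ c') (n := b - t) h5
  have h6 : b ≤ (L i \ c').card := by
    have := Finset.le_card_sdiff c' (L i)
    omega
  have h7 : t ≤ ((L i \ c') \ X).card := by
    have := Finset.le_card_sdiff X (L i \ c')
    omega
  obtain ⟨Y, hY, hYcard⟩ := Finset.exists_subset_card_eq (n := t) h7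
  have hXY : Disjoint X Y := by
    rw [Finset.disjoint_right]
    intro x hx
    exact (Finset.mem_sdiff.1 (hY hx)).2
  have hcunion : (X ∪ Y).card = b := by
    rw [Finset.card_union_of_disjoint hXY]; omega
  have hXLi : X ⊆ L i := fun x hx => hFsub (hG (Finset.mem_sdiff.1 (hX hx)).1)
  have hYLi : Y ⊆ L i := fun x hx =>
    (Finset.mem_sdiff.1 (Finset.mem_sdiff.1 (hY hx)).1).1
  have hcsubL : X ∪ Y ⊆ L i := Finset.union_subset hXLi hYLi
  have hcF : b - t ≤ ((X ∪ Y) ∩ F).card := by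
    have : X ⊆ (X ∪ Y) ∩ F := by
      intro x hx
      exact Finset.mem_inter.2 ⟨Finset.mem_union_left _ hx,
        hG (Finset.mem_sdiff.1 (hX hx)).1⟩
    have := Finset.card_le_card this
    omega
  have hfeas : Feas L b i (X ∪ Y) := hF _ hcsubL hcunion hcF
  have hdisj : Disjoint (X ∪ Y) c' := by
    rw [Finset.disjoint_left]
    intro x hx hxc
    rcases Finset.mem_union.1 hx with hx | hx
    · exact (Finset.mem_sdiff.1 (hX hx)).2 hxc
    · exact (Finset.mem_sdiff.1 (Finset.mem_sdiff.1 (hY hx)).1).2 hxc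
  exact feas_extend hfeas hc' hcard hdisj

lemma chunks {L : ℕ → Finset ℕ} {b e N : ℕ} (he : 1 ≤ e) (heb : e < b)
    (h0 : (L 0).card = b)
    (hmid : ∀ i, 1 ≤ i → i ≤ N → (L i).card = 2 * b + e) :
    ∀ k, 2 * k + 1 ≤ N →
      ∃ F, InvP L b (2 * k + 1) (min (k * e) (b - e)) F ∧ b + e ≤ F.card := by
  intro k
  induction k with
  | zero =>
    intro hk
    have hL1 : (L 1).card = 2 * b + e := hmid 1 (by omega) (by omega)
    refine ⟨L 1 \ L 0, ?_, ?_⟩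
    · have : min (0 * e) (b - e) = 0 := by simp
      rw [this]
      exact inv_base h0
    · have := Finset.le_card_sdiff (L 0) (L 1)
      omega
  | succ k ih =>
    intro hk
    have hk' : 2 * k + 1 ≤ N := by omega
    obtain ⟨F, hInv, hFcard⟩ := ih hk'
    have hke : (k + 1) * e = k * e + e := by ring
    set t := min (k * e) (b - e) with ht
    set t' := min ((k + 1) * e) (b - e) with ht'
    have hδ : t ≤ t' ∧ t' ≤ t + e ∧ t' ≤ b - e := by
      constructor
      · omega
      · omega
    obtain ⟨G, hG, hGcard⟩ := Finset.exists_subset_card_eq (s := F) (n := b + (t' - t))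
      (by omega)
    have step1 := inv_step (L := L) (i := 2 * k + 1)
      (by rw [hmid (2 * k + 1) (by omega) (by omega)]; omega)
      hInv hG hGcard (by omega)
    have hL2 : (L (2 * k + 1 + 1)).card = 2 * b + e :=
      hmid (2 * k + 2) (by omega) (by omega)
    have hF1card : b ≤ ((L (2 * k + 1 + 1)) \ G).card := by
      have := Finset.le_card_sdiff G (L (2 * k + 1 + 1))
      omega
    obtain ⟨G1, hG1, hG1card⟩ := Finset.exists_subset_card_eq (n := b) hF1card
    have step2 := inv_step (L := L) (i := 2 * k + 1 + 1)
      (by rw [hL2]; omega)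
      step1 hG1 (show G1.card = b + 0 by omega) (by omega)
    have hidx : 2 * k + 1 + 1 + 1 = 2 * (k + 1) + 1 := by ring
    have htt : t + (t' - t) + 0 = t' := by omega
    rw [hidx, htt] at step2
    refine ⟨_, step2, ?_⟩
    have hL3 : (L (2 * (k + 1) + 1)).card = 2 * b + e :=
      hmid (2 * (k + 1) + 1) (by omega) (by omega)
    have h := Finset.le_card_sdiff G1 (L (2 * (k + 1) + 1))
    omega

/-- The endgame: from the invariant at vertex `p = n - 2` with `t = b - e` and
`|F| ≥ b`, finish the coloring on the last three vertices. -/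
lemma final {L : ℕ → Finset ℕ} {b e p : ℕ} {F : Finset ℕ}
    (he : 1 ≤ e) (heb : e < b)
    (hInv : InvP L b p (b - e) F) (hF : b ≤ F.card)
    (hp : (L p).card = 2 * b + e)
    (hq1 : (L (p + 1)).card = b + e) (hq2 : (L (p + 2)).card = b + e)
    (hamp : 2 * b ≤ (L (p + 1) ∪ L (p + 2)).card) :
    PathChoosable (p + 2) L (fun _ => b) := by
  obtain ⟨hFsub, hFinv⟩ := hInv
  set N1 := L (p + 1) with hN1
  set N2 := L (p + 2) with hN2
  set K := N1 \ N2 with hK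
  set I := N1 ∩ N2 with hI
  have hIK : K.card + I.card = b + e := by
    rw [hK, hI, Finset.card_sdiff_add_card_inter, hq1]
  have hUI : (N1 ∪ N2).card + I.card = (b + e) + (b + e) := by
    rw [hI, Finset.card_union_add_card_inter, hq1, hq2]
  have hIle : I.card ≤ 2 * e := by omega
  -- split F along K
  have hA : (F \ K).card + (F ∩ K).card = F.card :=
    Finset.card_sdiff_add_card_inter F K
  set x' := min e (F \ K).card with hx'
  set x3 := e - x' with hx3def
  have hA3K : (F ∩ K).card ≤ K.card := Finset.card_le_card Finset.inter_subset_right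
  have hx3 : x3 ≤ (F ∩ K).card := by omega
  have hB : b - e + x3 ≤ K.card := by omega
  obtain ⟨X', hX', hX'card⟩ := Finset.exists_subset_card_eq (s := F \ K) (n := x') (by omega)
  obtain ⟨X3, hX3, hX3card⟩ := Finset.exists_subset_card_eq (s := F ∩ K) (n := x3) hx3
  have hXdisj : Disjoint X' X3 := by
    rw [Finset.disjoint_left]
    intro x hx hx3m
    exact (Finset.mem_sdiff.1 (hX' hx)).2 (Finset.mem_inter.1 (hX3 hx3m)).2
  set X := X' ∪ X3 with hXdef
  have hXcard : X.card = e := by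
    rw [hXdef, Finset.card_union_of_disjoint hXdisj]; omega
  have hXF : X ⊆ F := Finset.union_subset
    (fun x hx => (Finset.mem_sdiff.1 (hX' hx)).1)
    (fun x hx => (Finset.mem_inter.1 (hX3 hx)).1)
  have hXK : X ∩ K ⊆ X3 := by
    intro x hx
    obtain ⟨hx1, hx2⟩ := Finset.mem_inter.1 hx
    rcases Finset.mem_union.1 hx1 with h | h
    · exact absurd hx2 (Finset.mem_sdiff.1 (hX' h)).2
    · exact h
  -- choose Y outside N1 ∪ X
  have hY' : b - e ≤ ((L p \ (N1 ∪ X))).card := by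
    have h1 := Finset.le_card_sdiff (N1 ∪ X) (L p)
    have h2 := Finset.card_union_le N1 X
    omega
  obtain ⟨Y, hY, hYcard⟩ := Finset.exists_subset_card_eq (n := b - e) hY'
  have hXYdisj : Disjoint X Y := by
    rw [Finset.disjoint_right]
    intro x hx
    have := (Finset.mem_sdiff.1 (hY hx)).2
    exact fun hxX => this (Finset.mem_union_right _ hxX)
  set c2 := X ∪ Y with hc2def
  have hc2card : c2.card = b := by
    rw [hc2def, Finset.card_union_of_disjoint hXYdisj]; omega
  have hc2L : c2 ⊆ L p := Finset.union_subset
    (fun x hx => hFsub (hXF hx))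
    (fun x hx => (Finset.mem_sdiff.1 (hY hx)).1)
  have hc2F : b - (b - e) ≤ (c2 ∩ F).card := by
    have hXsub : X ⊆ c2 ∩ F := by
      intro x hx
      exact Finset.mem_inter.2 ⟨Finset.mem_union_left _ hx, hXF hx⟩
    have := Finset.card_le_card hXsub
    omega
  obtain ⟨cs, hcsp, hcsmem, hcsdisj⟩ := hFinv c2 hc2L hc2card hc2F
  -- key intersection bounds
  have hYN1 : ∀ x ∈ Y, x ∉ N1 := by
    intro x hx hxN
    exact (Finset.mem_sdiff.1 (hY hx)).2 (Finset.mem_union_left _ hxN)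
  have hc2N1 : (c2 ∩ N1).card ≤ e := by
    have : c2 ∩ N1 ⊆ X := by
      intro x hx
      obtain ⟨hx1, hx2⟩ := Finset.mem_inter.1 hx
      rcases Finset.mem_union.1 hx1 with h | h
      · exact h
      · exact absurd hx2 (hYN1 x h)
    have := Finset.card_le_card this
    omega
  have hc2K : (K ∩ c2).card ≤ x3 := by
    have hsub : K ∩ c2 ⊆ X3 := by
      intro x hx
      obtain ⟨hx1, hx2⟩ := Finset.mem_inter.1 hx
      rcases Finset.mem_union.1 hx2 with h | h
      · exact hXK (Finset.mem_inter.2 ⟨h, hx1⟩)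
      · exact absurd (Finset.mem_sdiff.1 hx1).1 (hYN1 x h)
    have := Finset.card_le_card hsub
    omega
  have hKc2 : b - e ≤ (K \ c2).card := by
    have := Finset.card_sdiff_add_card_inter K c2
    omega
  -- choose c at p+1
  set z1 := min b (K \ c2).card with hz1def
  obtain ⟨Z1, hZ1, hZ1card⟩ := Finset.exists_subset_card_eq (s := K \ c2) (n := z1) (by omega)
  have hN1c2 : b ≤ (N1 \ c2).card := by
    have h1 := Finset.card_sdiff_add_card_inter N1 c2
    have h2 : (N1 ∩ c2).card = (c2 ∩ N1).card := by rw [Finset.inter_comm]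
    omega
  have hZ2' : b - z1 ≤ ((N1 \ c2) \ Z1).card := by
    have := Finset.le_card_sdiff Z1 (N1 \ c2)
    omega
  obtain ⟨Z2, hZ2, hZ2card⟩ := Finset.exists_subset_card_eq (n := b - z1) hZ2'
  have hZdisj : Disjoint Z1 Z2 := by
    rw [Finset.disjoint_right]
    intro x hx
    exact (Finset.mem_sdiff.1 (hZ2 hx)).2
  set cq := Z1 ∪ Z2 with hcqdef
  have hcqcard : cq.card = b := by
    rw [hcqdef, Finset.card_union_of_disjoint hZdisj]; omega
  have hZ1K : Z1 ⊆ K := fun x hx => (Finset.mem_sdiff.1 (hZ1 hx)).1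
  have hcqN1 : cq ⊆ N1 := Finset.union_subset
    (fun x hx => (Finset.mem_sdiff.1 (hZ1K hx)).1)
    (fun x hx => (Finset.mem_sdiff.1 (Finset.mem_sdiff.1 (hZ2 hx)).1).1)
  have hc2cq : Disjoint c2 cq := by
    rw [Finset.disjoint_right]
    intro x hx
    rcases Finset.mem_union.1 hx with h | h
    · exact (Finset.mem_sdiff.1 (hZ1 h)).2
    · exact (Finset.mem_sdiff.1 (Finset.mem_sdiff.1 (hZ2 h)).1).2
  have hcqN2 : (N2 ∩ cq).card ≤ e := by
    have hsub : N2 ∩ cq ⊆ Z2 := by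
      intro x hx
      obtain ⟨hx1, hx2⟩ := Finset.mem_inter.1 hx
      rcases Finset.mem_union.1 hx2 with h | h
      · exact absurd hx1 (Finset.mem_sdiff.1 (hZ1K h)).2
      · exact h
    have := Finset.card_le_card hsub
    omega
  have hN2cq : b ≤ (N2 \ cq).card := by
    have := Finset.card_sdiff_add_card_inter N2 cq
    omega
  obtain ⟨cn, hcn, hcncard⟩ := Finset.exists_subset_card_eq (s := N2 \ cq) (n := b) hN2cq
  have hcqcn : Disjoint cq cn := by
    rw [Finset.disjoint_right]
    intro x hx
    exact (Finset.mem_sdiff.1 (hcn hx)).2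
  -- assemble
  refine ⟨fun j => if j ≤ p then cs j else if j = p + 1 then cq else cn, ?_, ?_⟩
  · intro i hi
    rcases Nat.lt_or_ge p i with h | h
    · rcases Nat.lt_or_ge (p + 1) i with h2 | h2
      · have e3 : i = p + 2 := by omega
        subst e3
        have e1 : ¬ p + 2 ≤ p := by omega
        have e2 : p + 2 ≠ p + 1 := by omega
        simp only [if_neg e1, if_neg e2]
        exact ⟨fun x hx => (Finset.mem_sdiff.1 (hcn hx)).1, hcncard⟩
      · have e0 : i = p + 1 := by omega
        have e1 : ¬ i ≤ p := by omega
        simp only [if_neg e1, if_pos e0]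
        rw [e0]
        exact ⟨hcqN1, hcqcard⟩
    · simp only [if_pos h]
      exact hcsmem i h
  · intro i hi
    rcases Nat.lt_or_ge i p with h | h
    · have e1 : i ≤ p := by omega
      have e2 : i + 1 ≤ p := by omega
      simp only [if_pos e1, if_pos e2]
      exact hcsdisj i h
    · rcases Nat.lt_or_ge i (p + 1) with h2 | h2
      · have e0 : i = p := by omega
        subst e0
        show Disjoint (if i ≤ i then cs i else if i = i + 1 then cq else cn)
          (if i + 1 ≤ i then cs (i + 1) else if i + 1 = i + 1 then cq else cn)
        rw [if_pos (le_refl i), if_neg (by omega : ¬ i + 1 ≤ i), if_pos rfl, hcsp]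
        exact hc2cq
      · have e0 : i = p + 1 := by omega
        subst e0
        show Disjoint (if p + 1 ≤ p then cs (p + 1) else if p + 1 = p + 1 then cq else cn)
          (if p + 1 + 1 ≤ p then cs (p + 1 + 1) else if p + 1 + 1 = p + 1 then cq else cn)
        rw [if_neg (by omega : ¬ p + 1 ≤ p), if_pos rfl,
          if_neg (by omega : ¬ p + 1 + 1 ≤ p), if_neg (by omega : p + 1 + 1 ≠ p + 1)]
        exact hcqcn

theorem path_choosable_of_oneReduced (n a b e : ℕ) (hb : 1 ≤ b) (he : 1 ≤ e)
    (ha : a = 2 * b + e) (L : ℕ → Finset ℕ)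
    (h0 : (L 0).card = b)
    (hmid : ∀ i, 1 ≤ i → i ≤ n - 2 → (L i).card = a)
    (hn1 : (L (n - 1)).card = b + e) (hn : (L n).card = b + e)
    (hamp : (L (n - 1) ∪ L n).card ≥ 2 * b)
    (hlen : n = evenCeil b e) :
    PathChoosable n L (fun _ => b) := by
  subst ha
  set q := (b + e - 1) / e with hq
  have hn2m : n = 2 * q := hlen
  have hdm := Nat.div_add_mod (b + e - 1) e
  have hmod : (b + e - 1) % e < e := Nat.mod_lt _ (by omega)
  rw [← hq] at hdm
  have hble : b ≤ e * q := by omega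
  have hqub : e * q ≤ b + e - 1 := by omega
  by_cases hbe : b ≤ e
  · -- q = 1, n = 2
    have hq1 : q = 1 := by
      have h1 : 1 ≤ q := by
        rw [hq]
        rw [Nat.le_div_iff_mul_le (by omega : 0 < e)]
        omega
      have h2 : q < 2 := by
        rw [hq]
        rw [Nat.div_lt_iff_lt_mul (by omega : 0 < e)]
        omega
      omega
    have hn2 : n = 2 := by omega
    subst hn2
    -- direct construction
    have hL1 : (L 1).card = b + e := hn1
    have hL2 : (L 2).card = b + e := hn
    have h1 : b ≤ (L 1 \ L 0).card := by
      have := Finset.le_card_sdiff (L 0) (L 1)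
      omega
    obtain ⟨c1, hc1, hc1card⟩ := Finset.exists_subset_card_eq (n := b) h1
    have h2 : b ≤ (L 2 \ c1).card := by
      have := Finset.le_card_sdiff c1 (L 2)
      omega
    obtain ⟨c2, hc2, hc2card⟩ := Finset.exists_subset_card_eq (n := b) h2
    refine ⟨fun j => if j = 0 then L 0 else if j = 1 then c1 else c2, ?_, ?_⟩
    · intro i hi
      interval_cases i
      · simp [h0]
      · simpa using ⟨fun x hx => (Finset.mem_sdiff.1 (hc1 hx)).1, hc1card⟩
      · simpa using ⟨fun x hx => (Finset.mem_sdiff.1 (hc2 hx)).1, hc2card⟩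
    · intro i hi
      interval_cases i
      · simp only [if_pos rfl, Nat.zero_add, if_neg (by omega : (1:ℕ) ≠ 0), if_pos rfl]
        rw [Finset.disjoint_right]
        intro x hx
        exact (Finset.mem_sdiff.1 (hc1 hx)).2
      · simp only [if_neg (by omega : (1:ℕ) ≠ 0), if_pos rfl,
          if_neg (by omega : (2:ℕ) ≠ 0), if_neg (by omega : (2:ℕ) ≠ 1)]
        rw [Finset.disjoint_right]
        intro x hx
        exact (Finset.mem_sdiff.1 (hc2 hx)).2
  · -- e < b, q ≥ 2
    have heb : e < b := by omega
    have hq2 : 2 ≤ q := by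
      rw [hq, Nat.le_div_iff_mul_le (by omega : 0 < e)]
      omega
    obtain ⟨m, hm⟩ : ∃ m, q = m + 2 := ⟨q - 2, by omega⟩
    have hnval : n = 2 * m + 4 := by omega
    have hmid' : ∀ i, 1 ≤ i → i ≤ 2 * m + 2 → (L i).card = 2 * b + e := by
      intro i h1 h2
      exact hmid i h1 (by omega)
    obtain ⟨F, hInv, hFcard⟩ := chunks (N := 2 * m + 2) he heb h0 hmid' m (by omega)
    -- final transition from 2m+1 to 2m+2
    have hme : b ≤ (m + 2) * e := by
      have : e * q = (m + 2) * e := by rw [hm]; ring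
      omega
    set t0 := min (m * e) (b - e) with ht0
    have hme' : (m + 1) * e = m * e + e := by ring
    have hδ : t0 ≤ b - e ∧ b - e ≤ t0 + e := by
      constructor
      · omega
      · have : (m + 2) * e = m * e + 2 * e := by ring
        omega
    obtain ⟨G, hG, hGcard⟩ := Finset.exists_subset_card_eq (s := F) (n := b + ((b - e) - t0))
      (by omega)
    have stepf := inv_step (L := L) (i := 2 * m + 1)
      (by rw [hmid' (2 * m + 1) (by omega) (by omega)]; omega)
      hInv hG hGcard (by omega)
    have hteq : t0 + (b - e - t0) = b - e := by omega
    rw [hteq] at stepf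
    have hFfcard : b ≤ ((L (2 * m + 1 + 1)) \ G).card := by
      have h1 := Finset.le_card_sdiff G (L (2 * m + 1 + 1))
      have h2 : (L (2 * m + 1 + 1)).card = 2 * b + e :=
        hmid' (2 * m + 2) (by omega) (by omega)
      omega
    -- apply final with p = 2m+2
    have hidx : 2 * m + 1 + 1 = 2 * m + 2 := by ring
    rw [hidx] at stepf hFfcard
    have hq1' : (L (2 * m + 2 + 1)).card = b + e := by
      have e1 : 2 * m + 2 + 1 = n - 1 := by omega
      rw [e1]
      exact hn1
    have hq2' : (L (2 * m + 2 + 2)).card = b + e := by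
      have : (2 : ℕ) * m + 2 + 2 = n := by omega
      rw [this]
      exact hn
    have hamp' : 2 * b ≤ (L (2 * m + 2 + 1) ∪ L (2 * m + 2 + 2)).card := by
      have e1 : 2 * m + 2 + 1 = n - 1 := by omega
      have e2 : 2 * m + 2 + 2 = n := by omega
      rw [e1, e2]
      exact hamp
    have := final he heb stepf hFfcard
      (hmid' (2 * m + 2) (by omega) (by omega)) hq1' hq2' hamp'
    have : PathChoosable (2 * m + 2 + 2) L (fun _ => b) := this
    have heqn : 2 * m + 2 + 2 = n := by omega
    rw [heqn] at this
    exact this
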